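/- For every n ≥ 0, n! = Σ_{λ⊢n} (f_λ)², where f_λ is the number of standard Young tableaux of shape λ. -/
import Mathlib


/-- `YDCovers μ λ` means `μ ⋖ λ` in Young's lattice: `μ ⊆ λ` and `|λ| = |μ| + 1`. -/
def YDCovers (μ ν : YoungDiagram) : Prop :=
  μ.cells ⊆ ν.cells ∧ ν.cells.card = μ.cells.card + 1

lemma YD_row_lt_card {l : YoungDiagram} {i j : ℕ} (h : (i, j) ∈ l) :
    i < l.cells.card := by
  have hsub : (Finset.range (i + 1)).image (fun k => (k, j)) ⊆ l.cells := by
    intro p hp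
    simp only [Finset.mem_image, Finset.mem_range] at hp
    obtain ⟨k, hk, rfl⟩ := hp
    simpa [YoungDiagram.mem_cells] using
      l.up_left_mem (Nat.lt_succ_iff.mp hk) le_rfl h
  have hc := Finset.card_le_card hsub
  rwa [Finset.card_image_of_injective _ (fun a b hab => by
      simpa using congrArg Prod.fst hab), Finset.card_range] at hc

lemma YD_col_lt_card {l : YoungDiagram} {i j : ℕ} (h : (i, j) ∈ l) :
    j < l.cells.card := by
  have hsub : (Finset.range (j + 1)).image (fun k => (i, k)) ⊆ l.cells := by
    intro p hp
    simp only [Finset.mem_image, Finset.mem_range] at hp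
    obtain ⟨k, hk, rfl⟩ := hp
    simpa [YoungDiagram.mem_cells] using
      l.up_left_mem le_rfl (Nat.lt_succ_iff.mp hk) h
  have hc := Finset.card_le_card hsub
  rwa [Finset.card_image_of_injective _ (fun a b hab => by
      simpa using congrArg Prod.snd hab), Finset.card_range] at hc

lemma YD_finite_bounded (B : Finset (ℕ × ℕ)) :
    {l : YoungDiagram | l.cells ⊆ B}.Finite := by
  have himg : (YoungDiagram.cells '' {l : YoungDiagram | l.cells ⊆ B}).Finite := by
    refine Set.Finite.subset (B.powerset : Finset (Finset (ℕ × ℕ))).finite_toSet ?_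
    rintro s ⟨l, hl, rfl⟩
    simpa using hl
  refine Set.Finite.of_finite_image himg ?_
  intro a _ b _ hab
  cases a; cases b; simpa using hab

lemma YD_finite_down (l : YoungDiagram) : {m : YoungDiagram | YDCovers m l}.Finite :=
  (YD_finite_bounded l.cells).subset fun _ hm => hm.1

lemma YD_finite_up (l : YoungDiagram) : {n : YoungDiagram | YDCovers l n}.Finite := by
  refine (YD_finite_bounded
    (Finset.range (l.cells.card + 1) ×ˢ Finset.range (l.cells.card + 1))).subset ?_
  rintro n ⟨_, hcard⟩ c hc
  obtain ⟨i, j⟩ := c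
  have hmem : (i, j) ∈ n := by simpa [YoungDiagram.mem_cells] using hc
  have h1 : i < n.cells.card := YD_row_lt_card hmem
  have h2 : j < n.cells.card := YD_col_lt_card hmem
  simp only [Finset.mem_product, Finset.mem_range]
  omega

/-- The set 𝒰(λ) of diagrams covering `l`, as a `Finset`. -/
noncomputable def upFinset (l : YoungDiagram) : Finset YoungDiagram :=
  (YD_finite_up l).toFinset

/-- The set 𝒟(λ) of diagrams covered by `l`, as a `Finset`. -/
noncomputable def downFinset (l : YoungDiagram) : Finset YoungDiagram :=
  (YD_finite_down l).toFinset

/-- Standard Young tableaux of shape `l`, encoded as saturated chains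
`⊥ = T 0 ⋖ T 1 ⋖ ⋯ ⋖ T n = l` in Young's lattice. -/
def SYTset (l : YoungDiagram) : Set (ℕ → YoungDiagram) :=
  {T | T 0 = ⊥ ∧ (∀ i, i < l.cells.card → YDCovers (T i) (T (i + 1))) ∧
    ∀ i, l.cells.card ≤ i → T i = l}

/-- `fTab l` is the number of standard Young tableaux of shape `l`. -/
noncomputable def fTab (l : YoungDiagram) : ℕ := Nat.card (SYTset l)

/-- arm-length of a cell -/
def armLen (l : YoungDiagram) (c : ℕ × ℕ) : ℕ := l.rowLen c.1 - (c.2 + 1)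

/-- leg-length of a cell -/
def legLen (l : YoungDiagram) (c : ℕ × ℕ) : ℕ := l.colLen c.2 - (c.1 + 1)

/-- hook-length of a cell -/
def hookLen (l : YoungDiagram) (c : ℕ × ℕ) : ℕ := armLen l c + legLen l c + 1

/-- product of all hook-lengths of a diagram -/
def Hprod (l : YoungDiagram) : ℕ := ∏ c ∈ l.cells, hookLen l c

/-- For `r ⋖ k`, the unique box of `k / r`. -/
def diffBox (r k : YoungDiagram) : ℕ × ℕ := (k.cells \ r.cells).sup id

/-- Given the removed box `bm = λ/μ` and the added box `bn = ν/λ`, the unique cell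
`c_{μ,ν}` of `λ` in the row of one box and the column of the other. -/
def cellC (l : YoungDiagram) (bm bn : ℕ × ℕ) : ℕ × ℕ :=
  if (bm.1, bn.2) ∈ l.cells then (bm.1, bn.2) else (bn.1, bm.2)

/-- The field ℚ(q,t). -/
abbrev Kqt : Type := FractionRing (MvPolynomial (Fin 2) ℚ)

noncomputable def qq : Kqt := algebraMap (MvPolynomial (Fin 2) ℚ) Kqt (MvPolynomial.X 0)
noncomputable def tt : Kqt := algebraMap (MvPolynomial (Fin 2) ℚ) Kqt (MvPolynomial.X 1)

/-- `[h_κ(c)]^ℓ = 1 - q^{a} t^{ℓ+1}`. -/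
noncomputable def hkL (k : YoungDiagram) (c : ℕ × ℕ) : Kqt :=
  1 - qq ^ armLen k c * tt ^ (legLen k c + 1)

/-- `[h_κ(c)]^a = 1 - q^{a+1} t^{ℓ}`. -/
noncomputable def hkA (k : YoungDiagram) (c : ℕ × ℕ) : Kqt :=
  1 - qq ^ (armLen k c + 1) * tt ^ legLen k c

/-- `b_κ(c)`. -/
noncomputable def bqt (k : YoungDiagram) (c : ℕ × ℕ) : Kqt := hkL k c / hkA k c

/-- cells of `r` in the row of the box `k/r` (the set ℛ_{κ/ρ}). -/
def rowCells (r k : YoungDiagram) : Finset (ℕ × ℕ) :=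
  r.cells.filter (fun c => c.1 = (diffBox r k).1)

/-- cells of `r` in the column of the box `k/r` (the set 𝒞_{κ/ρ}). -/
def colCells (r k : YoungDiagram) : Finset (ℕ × ℕ) :=
  r.cells.filter (fun c => c.2 = (diffBox r k).2)

/-- `ψ_{κ/ρ}(q,t)` for a single-box skew shape `κ/ρ`. -/
noncomputable def psiE (r k : YoungDiagram) : Kqt :=
  ∏ c ∈ rowCells r k \ colCells r k, bqt r c / bqt k c

/-- `φ_{κ/ρ}(q,t)` for a single-box skew shape `κ/ρ`. -/
noncomputable def phiE (r k : YoungDiagram) : Kqt :=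
  bqt k (diffBox r k) * ∏ c ∈ colCells r k, bqt k c / bqt r c

/-- `α_{κ/ρ}`. -/
noncomputable def alphaE (r k : YoungDiagram) : Kqt :=
  (∏ c ∈ rowCells r k, hkL r c / hkL k c) * ∏ c ∈ colCells r k, hkA r c / hkA k c

/-- `ᾱ_{κ/ρ}`. -/
noncomputable def alphaBarE (r k : YoungDiagram) : Kqt :=
  (∏ c ∈ rowCells r k, hkA r c / hkA k c) * ∏ c ∈ colCells r k, hkL r c / hkL k c

/-- `η_{ν/λ/μ}` in terms of the removed box `bm = λ/μ` and the added box `bn = ν/λ`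
(rows and columns here are 0-indexed, so e.g. `r_ν - r_μ = bn.1 - bm.1`). -/
noncomputable def etaE (bm bn : ℕ × ℕ) : Kqt :=
  (1 - qq) * (1 - tt) /
    ((1 - qq ^ ((bm.2 : ℤ) - bn.2) * tt ^ ((bn.1 : ℤ) - bm.1)) *
     (1 - qq ^ ((bm.2 : ℤ) - bn.2 + 1) * tt ^ ((bn.1 : ℤ) - bm.1 - 1)))

/-- `𝒫_λ(λ → ν) = t^{r_ν - 1} α_{ν/λ}` (0-indexed: `r_ν - 1 = (diffBox l n).1`). -/
noncomputable def Ptop (l n : YoungDiagram) : Kqt :=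
  tt ^ (diffBox l n).1 * alphaE l n

/-- `𝒫_λ(μ → ν)` for `μ ∈ 𝒟(λ)`. -/
noncomputable def Pmove (l m n : YoungDiagram) : Kqt :=
  tt ^ (((diffBox l n).1 : ℤ) - (diffBox m l).1 - 1) * (alphaE l n / alphaE m l) *
    etaE (diffBox m l) (diffBox l n)

/-- `𝒫̄_λ(λ ← ν) = t^{r_ν - 1} ᾱ_{ν/λ}`. -/
noncomputable def PbarTop (l n : YoungDiagram) : Kqt :=
  tt ^ (diffBox l n).1 * alphaBarE l n

/-- `𝒫̄_λ(μ ← ν)` for `μ ∈ 𝒟(λ)`. -/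
noncomputable def PbarMove (l m n : YoungDiagram) : Kqt :=
  tt ^ (((diffBox l n).1 : ℤ) - (diffBox m l).1 - 1) * (alphaBarE l n / alphaBarE m l) *
    etaE (diffBox m l) (diffBox l n)

/-- `ψ_T(q,t)` for a standard tableau encoded as a chain of shapes. -/
noncomputable def psiT (n : ℕ) (T : ℕ → YoungDiagram) : Kqt :=
  ∏ i ∈ Finset.range n, psiE (T i) (T (i + 1))

/-- `φ_T(q,t)` for a standard tableau encoded as a chain of shapes. -/
noncomputable def phiT (n : ℕ) (T : ℕ → YoungDiagram) : Kqt :=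
  ∏ i ∈ Finset.range n, phiE (T i) (T (i + 1))

/-- The up operator `U` on ℚ𝕐. -/
noncomputable def Uop : Module.End ℚ (YoungDiagram →₀ ℚ) :=
  Finsupp.lsum ℚ fun l => LinearMap.toSpanSingleton ℚ _
    (∑ n ∈ upFinset l, Finsupp.single n (1 : ℚ))

/-- The down operator `D` on ℚ𝕐. -/
noncomputable def Dop : Module.End ℚ (YoungDiagram →₀ ℚ) :=
  Finsupp.lsum ℚ fun l => LinearMap.toSpanSingleton ℚ _
    (∑ m ∈ downFinset l, Finsupp.single m (1 : ℚ))

/-- The (q,t)-up operator `U_{q,t}`. -/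
noncomputable def Uqt : Module.End Kqt (YoungDiagram →₀ Kqt) :=
  Finsupp.lsum Kqt fun l => LinearMap.toSpanSingleton Kqt _
    (∑ n ∈ upFinset l, Finsupp.single n (psiE l n))

/-- The (q,t)-down operator `D_{q,t}`. -/
noncomputable def Dqt : Module.End Kqt (YoungDiagram →₀ Kqt) :=
  Finsupp.lsum Kqt fun l => LinearMap.toSpanSingleton Kqt _
    (∑ m ∈ downFinset l, Finsupp.single m (phiE m l))

section AuxProof

open Finset

lemma YD_eq_of_cells_eq {μ ν : YoungDiagram} (h : μ.cells = ν.cells) : μ = ν :=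
  YoungDiagram.ext h

lemma YDCovers.le {μ ν : YoungDiagram} (h : YDCovers μ ν) : μ ≤ ν :=
  YoungDiagram.cells_subset_iff.mp h.1

lemma YDCovers.card {μ ν : YoungDiagram} (h : YDCovers μ ν) :
    ν.cells.card = μ.cells.card + 1 := h.2

lemma mem_upFinset {l n : YoungDiagram} : n ∈ upFinset l ↔ YDCovers l n := by
  simp [upFinset]

lemma mem_downFinset {l m : YoungDiagram} : m ∈ downFinset l ↔ YDCovers m l := by
  simp [downFinset]

/-- If `μ ≠ ρ` are both covered by `ν`, then `μ ⊔ ρ = ν` and `μ ⊓ ρ` is covered by both. -/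
lemma covers_lattice_up {μ ρ ν : YoungDiagram} (hμ : YDCovers μ ν) (hρ : YDCovers ρ ν)
    (hne : μ ≠ ρ) : μ ⊔ ρ = ν ∧ YDCovers (μ ⊓ ρ) μ ∧ YDCovers (μ ⊓ ρ) ρ := by
  classical
  have hcard : μ.cells.card = ρ.cells.card := by
    have := hμ.2; have := hρ.2; omega
  have hsub : (μ ⊔ ρ).cells ⊆ ν.cells := by
    rw [YoungDiagram.cells_sup]
    exact Finset.union_subset hμ.1 hρ.1
  have hne' : μ.cells ≠ ρ.cells := fun h => hne (YD_eq_of_cells_eq h)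
  -- μ.cells ∪ ρ.cells has card > μ.cells.card
  have hssub : ¬ (μ.cells ∪ ρ.cells ⊆ μ.cells) := by
    intro h
    have h1 : ρ.cells ⊆ μ.cells := (Finset.subset_union_right).trans h
    exact hne' (Finset.eq_of_subset_of_card_le h1 hcard.le).symm
  have hlt : μ.cells.card < (μ.cells ∪ ρ.cells).card := by
    apply Finset.card_lt_card
    exact HasSubset.Subset.ssubset_of_not_subset Finset.subset_union_left hssub
  have hcardsup : (μ ⊔ ρ).cells = ν.cells := by
    apply Finset.eq_of_subset_of_card_le hsub
    rw [YoungDiagram.cells_sup]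
    have := hμ.2
    omega
  have hsupeq : μ ⊔ ρ = ν := YD_eq_of_cells_eq hcardsup
  have hinter : (μ ⊓ ρ).cells.card + 1 = μ.cells.card := by
    have h2 := Finset.card_union_add_card_inter μ.cells ρ.cells
    have h3 : (μ.cells ∪ ρ.cells).card = ν.cells.card := by
      rw [← YoungDiagram.cells_sup, hcardsup]
    have h4 : (μ.cells ∪ ρ.cells).card ≤ ν.cells.card := h3.le
    rw [YoungDiagram.cells_inf]
    have := hμ.2
    omega
  refine ⟨hsupeq, ⟨?_, hinter.symm⟩, ⟨?_, by omega⟩⟩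
  · rw [YoungDiagram.cells_inf]; exact Finset.inter_subset_left
  · rw [YoungDiagram.cells_inf]; exact Finset.inter_subset_right

/-- If `μ ≠ ρ` both cover `lam`, then `μ ⊓ ρ = lam` and `μ ⊔ ρ` covers both. -/
lemma covers_lattice_down {lam μ ρ : YoungDiagram} (hμ : YDCovers lam μ) (hρ : YDCovers lam ρ)
    (hne : μ ≠ ρ) : μ ⊓ ρ = lam ∧ YDCovers μ (μ ⊔ ρ) ∧ YDCovers ρ (μ ⊔ ρ) := by
  classical
  have hne' : μ.cells ≠ ρ.cells := fun h => hne (YD_eq_of_cells_eq h)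
  have hsub : lam.cells ⊆ (μ ⊓ ρ).cells := by
    rw [YoungDiagram.cells_inf]; exact Finset.subset_inter hμ.1 hρ.1
  have hsub2 : (μ ⊓ ρ).cells ⊆ μ.cells := by
    rw [YoungDiagram.cells_inf]; exact Finset.inter_subset_left
  have hcard1 : lam.cells.card ≤ (μ ⊓ ρ).cells.card := Finset.card_le_card hsub
  have hcard2 : (μ ⊓ ρ).cells.card ≤ μ.cells.card := Finset.card_le_card hsub2
  have hnecard : (μ ⊓ ρ).cells.card ≠ μ.cells.card := by
    intro h
    have h1 : (μ ⊓ ρ).cells = μ.cells :=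
      Finset.eq_of_subset_of_card_le hsub2 h.ge
    have h2 : (μ ⊓ ρ).cells = ρ.cells := by
      apply Finset.eq_of_subset_of_card_le
      · rw [YoungDiagram.cells_inf]; exact Finset.inter_subset_right
      · have := hμ.2; have := hρ.2; omega
    exact hne' (h1 ▸ h2 ▸ rfl)
  have hcardeq : (μ ⊓ ρ).cells.card = lam.cells.card := by
    have := hμ.2; omega
  have hinfeq : μ ⊓ ρ = lam :=
    (YD_eq_of_cells_eq (Finset.eq_of_subset_of_card_le hsub hcardeq.le)).symm
  have hunion : (μ ⊔ ρ).cells.card = μ.cells.card + 1 := by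
    have h2 := Finset.card_union_add_card_inter μ.cells ρ.cells
    rw [← YoungDiagram.cells_sup, ← YoungDiagram.cells_inf] at h2
    have h3 : (μ ⊓ ρ).cells.card = lam.cells.card := hcardeq
    have := hμ.2; have := hρ.2
    omega
  refine ⟨hinfeq, ⟨?_, hunion⟩, ⟨?_, ?_⟩⟩
  · rw [YoungDiagram.cells_sup]; exact Finset.subset_union_left
  · rw [YoungDiagram.cells_sup]; exact Finset.subset_union_right
  · have := hμ.2; have := hρ.2; omega

end AuxProof
section Corners

open Finset

/-- Rows where a cell can be added. -/
def addableRows (μ : YoungDiagram) : Finset ℕ :=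
  (Finset.range (μ.colLen 0 + 1)).filter (fun i => i = 0 ∨ μ.rowLen i < μ.rowLen (i - 1))

/-- Rows whose last cell can be removed. -/
def removableRows (μ : YoungDiagram) : Finset ℕ :=
  (Finset.range (μ.colLen 0)).filter (fun i => μ.rowLen (i + 1) < μ.rowLen i)

lemma mem_addableRows {μ : YoungDiagram} {i : ℕ} :
    i ∈ addableRows μ ↔ (i = 0 ∨ μ.rowLen i < μ.rowLen (i - 1)) := by
  simp only [addableRows, Finset.mem_filter, Finset.mem_range, and_iff_right_iff_imp]
  rintro (rfl | h)
  · omega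
  · have h0 : 0 < μ.rowLen (i - 1) := by omega
    have : (i - 1, 0) ∈ μ := YoungDiagram.mem_iff_lt_rowLen.mpr h0
    have := YoungDiagram.mem_iff_lt_colLen.mp this
    omega

lemma mem_removableRows {μ : YoungDiagram} {i : ℕ} :
    i ∈ removableRows μ ↔ μ.rowLen (i + 1) < μ.rowLen i := by
  simp only [removableRows, Finset.mem_filter, Finset.mem_range, and_iff_right_iff_imp]
  intro h
  have h0 : 0 < μ.rowLen i := by omega
  have : (i, 0) ∈ μ := YoungDiagram.mem_iff_lt_rowLen.mpr h0
  have := YoungDiagram.mem_iff_lt_colLen.mp this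
  omega

lemma card_addable_eq (μ : YoungDiagram) :
    (addableRows μ).card = (removableRows μ).card + 1 := by
  classical
  have h : addableRows μ = insert 0 ((removableRows μ).image (· + 1)) := by
    ext j
    simp only [mem_addableRows, Finset.mem_insert, Finset.mem_image, mem_removableRows]
    constructor
    · rintro (rfl | h)
      · exact Or.inl rfl
      · rcases Nat.eq_zero_or_pos j with rfl | hj
        · exact Or.inl rfl
        · refine Or.inr ⟨j - 1, ?_, by omega⟩
          have hj1 : j - 1 + 1 = j := by omega
          rw [hj1]
          exact h
    · rintro (rfl | ⟨i, hi, rfl⟩)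
      · exact Or.inl rfl
      · exact Or.inr (by simpa using hi)
  rw [h, Finset.card_insert_of_notMem (by simp), Finset.card_image_of_injective _
    (fun a b hab => by omega)]

/-- Adding a cell at the end of row `i`. -/
def addCellYD (μ : YoungDiagram) (i : ℕ) (h : i = 0 ∨ μ.rowLen i < μ.rowLen (i - 1)) :
    YoungDiagram where
  cells := insert (i, μ.rowLen i) μ.cells
  isLowerSet := by
    rintro ⟨a1, a2⟩ ⟨b1, b2⟩ hba ha
    simp only [Finset.coe_insert, Set.mem_insert_iff, Finset.mem_coe,
      YoungDiagram.mem_cells] at ha ⊢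
    have hb1 : b1 ≤ a1 := hba.1
    have hb2 : b2 ≤ a2 := hba.2
    rcases ha with ha | ha
    · have ha1 : a1 = i := (Prod.ext_iff.mp ha).1
      have ha2 : a2 = μ.rowLen i := (Prod.ext_iff.mp ha).2
      rw [ha1] at hb1
      rcases Nat.lt_or_ge b2 (μ.rowLen i) with hlt | hge
      · right
        exact YoungDiagram.mem_iff_lt_rowLen.mpr
          (lt_of_lt_of_le hlt (μ.rowLen_anti _ _ hb1))
      · have hb2e : b2 = μ.rowLen i := by omega
        rcases Nat.lt_or_ge b1 i with h1 | h1
        · right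
          have hi : μ.rowLen i < μ.rowLen (i - 1) := by
            rcases h with h' | h'
            · omega
            · exact h'
          have : μ.rowLen (i - 1) ≤ μ.rowLen b1 := μ.rowLen_anti _ _ (by omega)
          exact YoungDiagram.mem_iff_lt_rowLen.mpr (by omega)
        · left
          have : b1 = i := by omega
          simp [Prod.ext_iff, this, hb2e]
    · right
      exact μ.isLowerSet hba ha

lemma rowLen_notMem (μ : YoungDiagram) (i : ℕ) : (i, μ.rowLen i) ∉ μ := by
  simp [YoungDiagram.mem_iff_lt_rowLen]

lemma covers_addCellYD (μ : YoungDiagram) (i : ℕ) (h : i = 0 ∨ μ.rowLen i < μ.rowLen (i - 1)) :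
    YDCovers μ (addCellYD μ i h) := by
  constructor
  · exact Finset.subset_insert _ _
  · exact Finset.card_insert_of_notMem (by simpa [YoungDiagram.mem_cells] using rowLen_notMem μ i)

lemma cover_up_exists {μ ν : YoungDiagram} (h : YDCovers μ ν) :
    ∃ i, ∃ hi : i = 0 ∨ μ.rowLen i < μ.rowLen (i - 1), ν = addCellYD μ i hi := by
  classical
  have hd : (ν.cells \ μ.cells).card = 1 := by
    rw [Finset.card_sdiff_of_subset h.1]
    have := h.2
    omega
  obtain ⟨c, hc⟩ := Finset.card_eq_one.mp hd
  obtain ⟨i, j⟩ := c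
  have hmemd : (i, j) ∈ ν.cells \ μ.cells := hc ▸ Finset.mem_singleton_self _
  have hν : (i, j) ∈ ν := by
    rw [← YoungDiagram.mem_cells]; exact (Finset.mem_sdiff.mp hmemd).1
  have hμ : (i, j) ∉ μ := by
    rw [← YoungDiagram.mem_cells]; exact (Finset.mem_sdiff.mp hmemd).2
  have hother : ∀ x, x ∈ ν → x ≠ (i, j) → x ∈ μ := by
    intro x hx hne
    by_contra hxm
    have : x ∈ ν.cells \ μ.cells := Finset.mem_sdiff.mpr ⟨hx, hxm⟩
    rw [hc, Finset.mem_singleton] at this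
    exact hne this
  have hj : j = μ.rowLen i := by
    have h1 : μ.rowLen i ≤ j := by
      by_contra hcon
      exact hμ (YoungDiagram.mem_iff_lt_rowLen.mpr (by omega))
    rcases lt_or_eq_of_le h1 with hlt | heq
    · exfalso
      have : (i, μ.rowLen i) ∈ ν := ν.up_left_mem le_rfl hlt.le hν
      have : (i, μ.rowLen i) ∈ μ := hother _ this (by simp [Prod.ext_iff]; omega)
      exact rowLen_notMem μ i this
    · exact heq.symm
  subst hj
  have hadd : i = 0 ∨ μ.rowLen i < μ.rowLen (i - 1) := by
    rcases Nat.eq_zero_or_pos i with rfl | hi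
    · exact Or.inl rfl
    · right
      have h1 : (i - 1, μ.rowLen i) ∈ ν := ν.up_left_mem (by omega) le_rfl hν
      have h2 : (i - 1, μ.rowLen i) ∈ μ := hother _ h1 (by simp [Prod.ext_iff]; omega)
      exact YoungDiagram.mem_iff_lt_rowLen.mp h2
  refine ⟨i, hadd, ?_⟩
  apply YD_eq_of_cells_eq
  have hsub : insert (i, μ.rowLen i) μ.cells ⊆ ν.cells := by
    intro x hx
    rcases Finset.mem_insert.mp hx with rfl | hx
    · exact hν
    · exact h.1 hx
  have hcard : ν.cells.card ≤ (insert (i, μ.rowLen i) μ.cells).card := by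
    rw [Finset.card_insert_of_notMem (by simpa [YoungDiagram.mem_cells] using rowLen_notMem μ i)]
    have := h.2
    omega
  show ν.cells = insert (i, μ.rowLen i) μ.cells
  exact (Finset.eq_of_subset_of_card_le hsub hcard).symm

/-- Removing the last cell of row `i`. -/
def eraseCellYD (μ : YoungDiagram) (i : ℕ) (h : μ.rowLen (i + 1) < μ.rowLen i) :
    YoungDiagram where
  cells := μ.cells.erase (i, μ.rowLen i - 1)
  isLowerSet := by
    rintro ⟨a1, a2⟩ ⟨b1, b2⟩ hba ha
    simp only [Finset.coe_erase, Set.mem_diff, Finset.mem_coe, YoungDiagram.mem_cells,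
      Set.mem_singleton_iff] at ha ⊢
    have hb1 : b1 ≤ a1 := hba.1
    have hb2 : b2 ≤ a2 := hba.2
    obtain ⟨haμ, hane⟩ := ha
    refine ⟨μ.isLowerSet hba haμ, ?_⟩
    rintro hbe
    have hb1e : b1 = i := (Prod.ext_iff.mp hbe).1
    have hb2e : b2 = μ.rowLen i - 1 := (Prod.ext_iff.mp hbe).2
    rw [hb1e] at hb1
    rw [hb2e] at hb2
    have hr : 1 ≤ μ.rowLen i := by omega
    have ha2 : a2 < μ.rowLen a1 := YoungDiagram.mem_iff_lt_rowLen.mp haμ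
    have hle : μ.rowLen a1 ≤ μ.rowLen i := μ.rowLen_anti _ _ hb1
    have ha1 : a1 = i := by
      by_contra hcon
      have : μ.rowLen a1 ≤ μ.rowLen (i + 1) := μ.rowLen_anti _ _ (by omega)
      omega
    apply hane
    rw [ha1] at ha2 ⊢
    simp only [Prod.ext_iff]
    exact ⟨trivial, by omega⟩

lemma covers_eraseCellYD (μ : YoungDiagram) (i : ℕ) (h : μ.rowLen (i + 1) < μ.rowLen i) :
    YDCovers (eraseCellYD μ i h) μ := by
  have hmem : (i, μ.rowLen i - 1) ∈ μ.cells := by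
    rw [YoungDiagram.mem_cells]
    exact YoungDiagram.mem_iff_lt_rowLen.mpr (by omega)
  constructor
  · exact Finset.erase_subset _ _
  · show μ.cells.card = (μ.cells.erase _).card + 1
    rw [Finset.card_erase_of_mem hmem]
    have h1 : 1 ≤ μ.cells.card := Finset.card_pos.mpr ⟨_, hmem⟩
    omega

lemma cover_down_exists {m μ : YoungDiagram} (h : YDCovers m μ) :
    ∃ i, ∃ hi : μ.rowLen (i + 1) < μ.rowLen i, m = eraseCellYD μ i hi := by
  classical
  have hd : (μ.cells \ m.cells).card = 1 := by
    rw [Finset.card_sdiff_of_subset h.1]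
    have := h.2
    omega
  obtain ⟨c, hc⟩ := Finset.card_eq_one.mp hd
  obtain ⟨i, j⟩ := c
  have hmemd : (i, j) ∈ μ.cells \ m.cells := hc ▸ Finset.mem_singleton_self _
  have hμ : (i, j) ∈ μ := by
    rw [← YoungDiagram.mem_cells]; exact (Finset.mem_sdiff.mp hmemd).1
  have hm : (i, j) ∉ m := by
    rw [← YoungDiagram.mem_cells]; exact (Finset.mem_sdiff.mp hmemd).2
  have hother : ∀ x, x ∈ μ → x ≠ (i, j) → x ∈ m := by
    intro x hx hne
    by_contra hxm
    have : x ∈ μ.cells \ m.cells := Finset.mem_sdiff.mpr ⟨hx, hxm⟩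
    rw [hc, Finset.mem_singleton] at this
    exact hne this
  have hup : (i, j + 1) ∉ μ := by
    intro hcon
    have h1 : (i, j + 1) ∈ m := hother _ hcon (by simp [Prod.ext_iff])
    exact hm (m.up_left_mem le_rfl (by omega) h1)
  have hj : j + 1 = μ.rowLen i := by
    have h1 : j < μ.rowLen i := YoungDiagram.mem_iff_lt_rowLen.mp hμ
    have h2 : ¬ (j + 1 < μ.rowLen i) := fun hcon =>
      hup (YoungDiagram.mem_iff_lt_rowLen.mpr hcon)
    omega
  have hrem : μ.rowLen (i + 1) < μ.rowLen i := by
    have h1 : (i + 1, j) ∉ μ := by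
      intro hcon
      have h2 : (i + 1, j) ∈ m := hother _ hcon (by simp [Prod.ext_iff])
      exact hm (m.up_left_mem (by omega) le_rfl h2)
    have h2 : μ.rowLen (i + 1) ≤ j := by
      by_contra hcon
      exact h1 (YoungDiagram.mem_iff_lt_rowLen.mpr (by omega))
    omega
  refine ⟨i, hrem, ?_⟩
  apply YD_eq_of_cells_eq
  have hceq : (i, j) = (i, μ.rowLen i - 1) := by simp [Prod.ext_iff]; omega
  have hsub : m.cells ⊆ μ.cells.erase (i, μ.rowLen i - 1) := by
    intro x hx
    refine Finset.mem_erase.mpr ⟨?_, h.1 hx⟩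
    rintro rfl
    rw [← hceq] at hx
    exact hm (by rwa [YoungDiagram.mem_cells] at hx)
  apply Finset.eq_of_subset_of_card_le hsub
  rw [Finset.card_erase_of_mem (hceq ▸ (YoungDiagram.mem_cells _).mpr hμ)]
  have := h.2
  omega

lemma card_upFinset_eq (μ : YoungDiagram) :
    (upFinset μ).card = (addableRows μ).card := by
  classical
  symm
  apply Finset.card_bij (fun i hi => addCellYD μ i (mem_addableRows.mp hi))
  · intro i hi
    exact mem_upFinset.mpr (covers_addCellYD μ i _)
  · intro a ha b hb heq
    have hcells := congrArg YoungDiagram.cells heq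
    simp only [addCellYD] at hcells
    have : (a, μ.rowLen a) ∈ insert (b, μ.rowLen b) μ.cells := by
      rw [← hcells]; exact Finset.mem_insert_self _ _
    rcases Finset.mem_insert.mp this with h | h
    · exact (Prod.ext_iff.mp h).1
    · exact absurd ((YoungDiagram.mem_cells _).mp h) (rowLen_notMem μ a)
  · intro ν hν
    obtain ⟨i, hi, rfl⟩ := cover_up_exists (mem_upFinset.mp hν)
    exact ⟨i, mem_addableRows.mpr hi, rfl⟩

lemma card_downFinset_eq (μ : YoungDiagram) :
    (downFinset μ).card = (removableRows μ).card := by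
  classical
  symm
  apply Finset.card_bij (fun i hi => eraseCellYD μ i (mem_removableRows.mp hi))
  · intro i hi
    exact mem_downFinset.mpr (covers_eraseCellYD μ i _)
  · intro a ha b hb heq
    have hcells := congrArg YoungDiagram.cells heq
    simp only [eraseCellYD] at hcells
    have hamem : (a, μ.rowLen a - 1) ∈ μ.cells := by
      rw [YoungDiagram.mem_cells]
      have := mem_removableRows.mp ha
      exact YoungDiagram.mem_iff_lt_rowLen.mpr (by omega)
    have h1 : (a, μ.rowLen a - 1) ∉ μ.cells.erase (b, μ.rowLen b - 1) := by
      rw [← hcells]; exact Finset.notMem_erase _ _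
    have h2 : (a, μ.rowLen a - 1) = (b, μ.rowLen b - 1) := by
      by_contra hne
      exact h1 (Finset.mem_erase.mpr ⟨hne, hamem⟩)
    exact (Prod.ext_iff.mp h2).1
  · intro m hm
    obtain ⟨i, hi, rfl⟩ := cover_down_exists (mem_downFinset.mp hm)
    exact ⟨i, mem_removableRows.mpr hi, rfl⟩

lemma card_up_down (μ : YoungDiagram) :
    (upFinset μ).card = (downFinset μ).card + 1 := by
  rw [card_upFinset_eq, card_downFinset_eq, card_addable_eq]

end Corners
section SYTCount

noncomputable local instance : DecidableEq (ℕ → YoungDiagram) := Classical.decEq _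

lemma SYT_card_chain {l : YoungDiagram} {T : ℕ → YoungDiagram} (hT : T ∈ SYTset l) :
    ∀ i, i ≤ l.cells.card → (T i).cells.card = i := by
  intro i
  induction i with
  | zero =>
    intro _
    rw [hT.1]
    simp [YoungDiagram.cells_bot]
  | succ k ih =>
    intro hk
    have h1 := hT.2.1 k (by omega)
    rw [h1.2, ih (by omega)]

lemma SYT_le {l : YoungDiagram} {T : ℕ → YoungDiagram} (hT : T ∈ SYTset l) (i : ℕ) :
    T i ≤ l := by
  rcases le_or_gt l.cells.card i with h | h
  · rw [hT.2.2 i h]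
  · have key : ∀ j, T (l.cells.card - j) ≤ l := by
      intro j
      induction j with
      | zero => rw [hT.2.2 _ (by omega)]
      | succ k ih =>
        rcases le_or_gt l.cells.card k with hk | hk
        · have he : l.cells.card - (k + 1) = l.cells.card - k := by omega
          rw [he]; exact ih
        · have h2 := hT.2.1 (l.cells.card - (k + 1)) (by omega)
          have h3 : l.cells.card - (k + 1) + 1 = l.cells.card - k := by omega
          rw [h3] at h2
          exact le_trans (YDCovers.le h2) ih
    have hkey := key (l.cells.card - i)
    rwa [Nat.sub_sub_self h.le] at hkey

lemma SYT_finite (l : YoungDiagram) : (SYTset l).Finite := by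
  rw [← Set.finite_coe_iff]
  haveI : Finite {m : YoungDiagram | m.cells ⊆ l.cells} :=
    (YD_finite_bounded l.cells).to_subtype
  apply Finite.of_injective (β := Fin (l.cells.card + 1) →
    {m : YoungDiagram | m.cells ⊆ l.cells})
    (fun T => fun i => ⟨T.1 i, YoungDiagram.cells_subset_iff.mpr (SYT_le T.2 i)⟩)
  intro T S h
  apply Subtype.ext
  funext i
  rcases le_or_gt i l.cells.card with hi | hi
  · have := congrFun h ⟨i, by omega⟩
    exact congrArg Subtype.val this
  · rw [T.2.2.2 i hi.le, S.2.2.2 i hi.le]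

lemma fTab_eq_toFinset (l : YoungDiagram) : fTab l = (SYT_finite l).toFinset.card := by
  rw [fTab, Nat.card_coe_set_eq, Set.ncard_eq_toFinset_card _ (SYT_finite l)]

lemma YD_card_zero {l : YoungDiagram} (h : l.cells.card = 0) : l = ⊥ :=
  YD_eq_of_cells_eq (by simp [Finset.card_eq_zero.mp h, YoungDiagram.cells_bot])

lemma fTab_bot : fTab ⊥ = 1 := by
  have hset : SYTset (⊥ : YoungDiagram) = {fun _ => (⊥ : YoungDiagram)} := by
    ext T
    simp only [SYTset, Set.mem_setOf_eq, Set.mem_singleton_iff]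
    constructor
    · rintro ⟨h0, _, hend⟩
      funext i
      exact hend i (by simp [YoungDiagram.cells_bot])
    · rintro rfl
      exact ⟨rfl, fun i hi => by simp [YoungDiagram.cells_bot] at hi, fun i _ => rfl⟩
  rw [fTab, hset, Nat.card_coe_set_eq, Set.ncard_singleton]

/-- Extension of a chain for `m ⋖ l` to a chain for `l`. -/
def extChain (l : YoungDiagram) (N : ℕ) (S : ℕ → YoungDiagram) : ℕ → YoungDiagram :=
  fun i => if i ≤ N then S i else l

lemma extChain_mem {l m : YoungDiagram} {N : ℕ} (hN : l.cells.card = N + 1)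
    (hm : YDCovers m l) {S : ℕ → YoungDiagram} (hS : S ∈ SYTset m) :
    extChain l N S ∈ SYTset l := by
  have hmc : m.cells.card = N := by have := hm.2; omega
  refine ⟨?_, ?_, ?_⟩
  · show (if 0 ≤ N then S 0 else l) = ⊥
    rw [if_pos (by omega)]
    exact hS.1
  · intro i hi
    rw [hN] at hi
    rcases lt_or_eq_of_le (Nat.lt_succ_iff.mp hi) with hlt | heq
    · show YDCovers (if i ≤ N then S i else l) (if i + 1 ≤ N then S (i + 1) else l)
      rw [if_pos (by omega), if_pos (by omega)]
      exact hS.2.1 i (by omega)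
    · subst heq
      show YDCovers (if i ≤ i then S i else l) (if i + 1 ≤ i then S (i + 1) else l)
      rw [if_pos le_rfl, if_neg (by omega)]
      have : S i = m := hS.2.2 i (by omega)
      rw [this]
      exact hm
  · intro i hi
    rw [hN] at hi
    show (if i ≤ N then S i else l) = l
    rw [if_neg (by omega)]

lemma extChain_at_N {m : YoungDiagram} (l : YoungDiagram) {N : ℕ}
    (hmc : m.cells.card = N) {S : ℕ → YoungDiagram} (hS : S ∈ SYTset m) :
    extChain l N S N = m := by
  show (if N ≤ N then S N else l) = m
  rw [if_pos le_rfl]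
  exact hS.2.2 N (by omega)

lemma SYT_toFinset_eq {l : YoungDiagram} {N : ℕ} (hN : l.cells.card = N + 1) :
    (SYT_finite l).toFinset =
      (downFinset l).biUnion (fun m => (SYT_finite m).toFinset.image (extChain l N)) := by
  classical
  ext T
  simp only [Set.Finite.mem_toFinset, Finset.mem_biUnion, Finset.mem_image]
  constructor
  · intro hT
    have hcov : YDCovers (T N) l := by
      have h1 := hT.2.1 N (by omega)
      have h2 : T (N + 1) = l := hT.2.2 (N + 1) (by omega)
      rwa [h2] at h1
    have hTN : (T N).cells.card = N := SYT_card_chain hT N (by omega)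
    refine ⟨T N, mem_downFinset.mpr hcov, fun i => T (min i N), ?_, ?_⟩
    · refine ⟨?_, ?_, ?_⟩
      · show T (min 0 N) = ⊥
        simpa using hT.1
      · intro i hi
        rw [hTN] at hi
        have h1 : min i N = i := by omega
        have h2 : min (i + 1) N = i + 1 := by omega
        show YDCovers (T (min i N)) (T (min (i + 1) N))
        rw [h1, h2]
        exact hT.2.1 i (by omega)
      · intro i hi
        rw [hTN] at hi
        have h1 : min i N = N := by omega
        show T (min i N) = T N
        rw [h1]
    · funext i
      show (if i ≤ N then T (min i N) else l) = T i
      rcases le_or_gt i N with hi | hi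
      · rw [if_pos hi, min_eq_left hi]
      · rw [if_neg (by omega), hT.2.2 i (by omega)]
  · rintro ⟨m, hm, S, hS, rfl⟩
    exact extChain_mem hN (mem_downFinset.mp hm) hS

lemma fTab_rec {l : YoungDiagram} {N : ℕ} (hN : l.cells.card = N + 1) :
    fTab l = ∑ m ∈ downFinset l, fTab m := by
  classical
  rw [fTab_eq_toFinset, SYT_toFinset_eq hN, Finset.card_biUnion]
  · refine Finset.sum_congr rfl fun m hm => ?_
    have hmc : m.cells.card = N := by
      have := (mem_downFinset.mp hm).2; omega
    rw [Finset.card_image_of_injOn, ← fTab_eq_toFinset]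
    intro S hS S' hS' heq
    simp only [Set.Finite.coe_toFinset, Set.mem_setOf_eq] at hS hS'
    funext i
    rcases le_or_gt i N with hi | hi
    · have := congrFun heq i
      show S i = S' i
      simpa [extChain, if_pos hi] using this
    · rw [hS.2.2 i (by omega), hS'.2.2 i (by omega)]
  · intro m hm m' hm' hne
    simp only [Finset.disjoint_left, Finset.mem_image]
    rintro T ⟨S, hS, rfl⟩ ⟨S', hS', heq⟩
    rw [Set.Finite.mem_toFinset] at hS hS'
    have hmc : m.cells.card = N := by
      have := (mem_downFinset.mp hm).2; omega
    have hmc' : m'.cells.card = N := by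
      have := (mem_downFinset.mp hm').2; omega
    apply hne
    have e1 : extChain l N S N = m := extChain_at_N l hmc hS
    have e2 : extChain l N S' N = m' := extChain_at_N l hmc' hS'
    rw [← e1, ← heq]
    exact e2

end SYTCount
section KeyLemma

lemma down_card {μ lam : YoungDiagram} (h : lam ∈ downFinset μ) :
    μ.cells.card = lam.cells.card + 1 := (mem_downFinset.mp h).2

lemma up_card {μ ν : YoungDiagram} (h : ν ∈ upFinset μ) :
    ν.cells.card = μ.cells.card + 1 := (mem_upFinset.mp h).2

lemma sum_up_aux : ∀ n : ℕ, ∀ μ : YoungDiagram, μ.cells.card = n →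
    ∑ ν ∈ upFinset μ, fTab ν = (n + 1) * fTab μ := by
  classical
  intro n
  induction n using Nat.strong_induction_on with
  | _ n IH =>
  intro μ hcard
  set s : Finset ((_ : YoungDiagram) × YoungDiagram) :=
    (upFinset μ).sigma (fun ν => downFinset ν) with hs
  have hA : ∑ ν ∈ upFinset μ, fTab ν = ∑ p ∈ s, fTab p.2 := by
    rw [hs, Finset.sum_sigma]
    refine Finset.sum_congr rfl fun ν hν => ?_
    exact fTab_rec (by rw [up_card hν, hcard])
  have hsplit := Finset.sum_filter_add_sum_filter_not s (fun p => p.2 = μ)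
    (fun p => fTab p.2)
  -- part 1 : the ρ = μ part
  have h1 : ∑ p ∈ s.filter (fun p => p.2 = μ), fTab p.2
      = ((downFinset μ).card + 1) * fTab μ := by
    rw [Finset.sum_filter, hs, Finset.sum_sigma]
    have hone : ∀ ν ∈ upFinset μ,
        (∑ ρ ∈ downFinset ν, if ρ = μ then fTab ρ else 0) = fTab μ := by
      intro ν hν
      rw [Finset.sum_eq_single_of_mem μ (mem_downFinset.mpr (mem_upFinset.mp hν))]
      · rw [if_pos rfl]
      · intro b _ hb
        rw [if_neg hb]
    rw [Finset.sum_congr rfl hone, Finset.sum_const, smul_eq_mul, card_up_down]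
  -- part 2 : the ρ ≠ μ part
  set t : Finset ((_ : YoungDiagram) × YoungDiagram) :=
    (downFinset μ).sigma (fun lam => (upFinset lam).erase μ) with ht
  have h2 : ∑ p ∈ s.filter (fun p => ¬ p.2 = μ), fTab p.2 = ∑ q ∈ t, fTab q.2 := by
    refine Finset.sum_nbij' (i := fun p => ⟨μ ⊓ p.2, p.2⟩) (j := fun q => ⟨μ ⊔ q.2, q.2⟩)
      ?_ ?_ ?_ ?_ ?_
    · rintro ⟨ν, ρ⟩ hp
      rw [Finset.mem_filter, hs, Finset.mem_sigma] at hp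
      obtain ⟨⟨hν, hρ⟩, hne⟩ := hp
      have hlat := covers_lattice_up (mem_upFinset.mp hν) (mem_downFinset.mp hρ)
        (fun h => hne (h.symm ▸ rfl))
      rw [ht, Finset.mem_sigma]
      refine ⟨mem_downFinset.mpr hlat.2.1, Finset.mem_erase.mpr ⟨?_, mem_upFinset.mpr hlat.2.2⟩⟩
      exact fun h => hne h
    · rintro ⟨lam, ρ⟩ hq
      rw [ht, Finset.mem_sigma, Finset.mem_erase] at hq
      obtain ⟨hlam, hρne, hρ⟩ := hq
      have hlat := covers_lattice_down (mem_downFinset.mp hlam) (mem_upFinset.mp hρ)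
        (fun h => hρne h.symm)
      rw [Finset.mem_filter, hs, Finset.mem_sigma]
      exact ⟨⟨mem_upFinset.mpr hlat.2.1, mem_downFinset.mpr hlat.2.2⟩, hρne⟩
    · rintro ⟨ν, ρ⟩ hp
      rw [Finset.mem_filter, hs, Finset.mem_sigma] at hp
      obtain ⟨⟨hν, hρ⟩, hne⟩ := hp
      have hlat := covers_lattice_up (mem_upFinset.mp hν) (mem_downFinset.mp hρ)
        (fun h => hne (h.symm ▸ rfl))
      have hsup : μ ⊔ ρ = ν := hlat.1
      show (⟨μ ⊔ ρ, ρ⟩ : (_ : YoungDiagram) × YoungDiagram) = ⟨ν, ρ⟩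
      rw [hsup]
    · rintro ⟨lam, ρ⟩ hq
      rw [ht, Finset.mem_sigma, Finset.mem_erase] at hq
      obtain ⟨hlam, hρne, hρ⟩ := hq
      have hlat := covers_lattice_down (mem_downFinset.mp hlam) (mem_upFinset.mp hρ)
        (fun h => hρne h.symm)
      show (⟨μ ⊓ ρ, ρ⟩ : (_ : YoungDiagram) × YoungDiagram) = ⟨lam, ρ⟩
      rw [hlat.1]
    · rintro ⟨ν, ρ⟩ _
      rfl
  -- evaluate the t-sum
  have hkey : ∀ lam ∈ downFinset μ,
      (∑ ρ ∈ (upFinset lam).erase μ, fTab ρ) + fTab μ = n * fTab lam := by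
    intro lam hlam
    have hl : lam.cells.card + 1 = n := by
      have := down_card hlam; omega
    have hμup : μ ∈ upFinset lam := mem_upFinset.mpr (mem_downFinset.mp hlam)
    rw [Finset.sum_erase_add _ _ hμup]
    rw [IH lam.cells.card (by omega) lam rfl]
    rw [hl]
  have h2' : (∑ q ∈ t, fTab q.2) + (downFinset μ).card * fTab μ
      = n * ∑ lam ∈ downFinset μ, fTab lam := by
    rw [ht, Finset.sum_sigma]
    calc (∑ lam ∈ downFinset μ, ∑ ρ ∈ (upFinset lam).erase μ, fTab ρ)
          + (downFinset μ).card * fTab μ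
        = ∑ lam ∈ downFinset μ, ((∑ ρ ∈ (upFinset lam).erase μ, fTab ρ) + fTab μ) := by
          rw [Finset.sum_add_distrib, Finset.sum_const, smul_eq_mul]
      _ = ∑ lam ∈ downFinset μ, n * fTab lam := Finset.sum_congr rfl hkey
      _ = n * ∑ lam ∈ downFinset μ, fTab lam := (Finset.mul_sum _ _ _).symm
  have h3 : n * (∑ lam ∈ downFinset μ, fTab lam) = n * fTab μ := by
    rcases Nat.eq_zero_or_pos n with rfl | hn
    · simp
    · congr 1
      exact (fTab_rec (by omega : μ.cells.card = (n - 1) + 1)).symm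
  -- assemble
  have hD : ∑ ν ∈ upFinset μ, fTab ν + (downFinset μ).card * fTab μ
      = (n + 1) * fTab μ + (downFinset μ).card * fTab μ := by
    rw [hA, ← hsplit, h1, h2]
    have hx := h2'
    rw [h3] at hx
    rw [add_assoc, hx]
    ring
  exact Nat.add_right_cancel hD

lemma sum_up (μ : YoungDiagram) :
    ∑ ν ∈ upFinset μ, fTab ν = (μ.cells.card + 1) * fTab μ :=
  sum_up_aux _ μ rfl

end KeyLemma
section Final

lemma shapes_finite (n : ℕ) : {l : YoungDiagram | l.cells.card = n}.Finite := by
  refine (YD_finite_bounded (Finset.range n ×ˢ Finset.range n)).subset ?_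
  rintro l hl c hc
  obtain ⟨i, j⟩ := c
  have hmem : (i, j) ∈ l := by simpa [YoungDiagram.mem_cells] using hc
  have h1 := YD_row_lt_card hmem
  have h2 := YD_col_lt_card hmem
  simp only [Finset.mem_product, Finset.mem_range]
  rw [Set.mem_setOf_eq] at hl
  omega

/-- The finset of Young diagrams with `n` cells. -/
noncomputable def Pn (n : ℕ) : Finset YoungDiagram := (shapes_finite n).toFinset

lemma mem_Pn {n : ℕ} {l : YoungDiagram} : l ∈ Pn n ↔ l.cells.card = n := by
  simp [Pn]

lemma sum_sq_eq_factorial (n : ℕ) : ∑ l ∈ Pn n, fTab l ^ 2 = Nat.factorial n := by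
  classical
  induction n with
  | zero =>
    have h : Pn 0 = {⊥} := by
      ext l
      simp only [mem_Pn, Finset.mem_singleton]
      constructor
      · exact YD_card_zero
      · rintro rfl; simp [YoungDiagram.cells_bot]
    rw [h, Finset.sum_singleton, fTab_bot]
    rfl
  | succ n ih =>
    have h1 : ∑ l ∈ Pn (n + 1), fTab l ^ 2
        = ∑ p ∈ (Pn (n + 1)).sigma (fun ν => downFinset ν), fTab p.1 * fTab p.2 := by
      rw [Finset.sum_sigma]
      refine Finset.sum_congr rfl fun ν hν => ?_
      show fTab ν ^ 2 = ∑ s ∈ downFinset ν, fTab ν * fTab s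
      rw [← Finset.mul_sum, ← fTab_rec (mem_Pn.mp hν), sq]
    have h2 : ∑ p ∈ (Pn (n + 1)).sigma (fun ν => downFinset ν), fTab p.1 * fTab p.2
        = ∑ q ∈ (Pn n).sigma (fun m => upFinset m), fTab q.2 * fTab q.1 := by
      refine Finset.sum_nbij' (i := fun p => ⟨p.2, p.1⟩) (j := fun q => ⟨q.2, q.1⟩)
        ?_ ?_ ?_ ?_ ?_
      · rintro ⟨ν, m⟩ hp
        rw [Finset.mem_sigma] at hp ⊢
        obtain ⟨hν, hm⟩ := hp
        have hcov := mem_downFinset.mp hm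
        refine ⟨mem_Pn.mpr ?_, mem_upFinset.mpr hcov⟩
        show m.cells.card = n
        have ha : ν.cells.card = m.cells.card + 1 := hcov.2
        have hb : ν.cells.card = n + 1 := mem_Pn.mp hν
        omega
      · rintro ⟨m, ν⟩ hq
        rw [Finset.mem_sigma] at hq ⊢
        obtain ⟨hm, hν⟩ := hq
        have hcov := mem_upFinset.mp hν
        refine ⟨mem_Pn.mpr ?_, mem_downFinset.mpr hcov⟩
        show ν.cells.card = n + 1
        have ha : ν.cells.card = m.cells.card + 1 := hcov.2
        have hb : m.cells.card = n := mem_Pn.mp hm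
        omega
      · rintro ⟨ν, m⟩ _; rfl
      · rintro ⟨m, ν⟩ _; rfl
      · rintro ⟨ν, m⟩ _; rfl
    have h3 : ∑ q ∈ (Pn n).sigma (fun m => upFinset m), fTab q.2 * fTab q.1
        = (n + 1) * ∑ m ∈ Pn n, fTab m ^ 2 := by
      rw [Finset.sum_sigma, Finset.mul_sum]
      refine Finset.sum_congr rfl fun m hm => ?_
      show ∑ s ∈ upFinset m, fTab s * fTab m = (n + 1) * fTab m ^ 2
      rw [← Finset.sum_mul, sum_up, mem_Pn.mp hm, sq]
      ring
    rw [h1, h2, h3, ih, Nat.factorial_succ]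

end Final
/-- `n! = Σ_{λ ⊢ n} (f_λ)²`. -/
theorem factorial_eq_sum_fTab_sq (n : ℕ) :
    Nat.factorial n = ∑ᶠ l ∈ {l : YoungDiagram | l.cells.card = n}, fTab l ^ 2 := by
  rw [show {l : YoungDiagram | l.cells.card = n} = ((Pn n : Finset YoungDiagram) : Set YoungDiagram)
    from (shapes_finite n).coe_toFinset.symm, finsum_mem_coe_finset, sum_sq_eq_factorial]
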